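/- Let E, c, ν be real with ν ≥ 0, and let ψ : ℝ → ℝ satisfy the integral equation ψ(x) = E(1 + (c/2)|x|)∫_0^x ψ(y) y dy − E x ∫_0^x ψ(y)(1 + (c/2)|y|) dy − (EAν²/2)|x| + A(1 + (c/2)|x|) + Bx for all x. Then ψ is continuous at 0 with ψ(0) = A, the one-sided derivatives satisfy ψ'(0+) − ψ'(0−) = (c − Eν²) ψ(0), and ψ'' + Eψ = 0 for x ≠ 0. -/

import Mathlib

open MeasureTheory Filter Set Topology

theorem stmt8 (E c ν A B : ℝ) (hν : 0 ≤ ν) (ψ : ℝ → ℝ) (hψc : Continuous ψ)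
    (hψ : ∀ x, ψ x = E * (1 + (c/2) * |x|) * (∫ y in (0:ℝ)..x, ψ y * y)
      - E * x * (∫ y in (0:ℝ)..x, ψ y * (1 + (c/2) * |y|))
      - (E * A * ν^2 / 2) * |x| + A * (1 + (c/2) * |x|) + B * x) :
    ψ 0 = A ∧ ContinuousAt ψ 0 ∧
    (∃ d₁ d₂ : ℝ, HasDerivWithinAt ψ d₁ (Ici 0) 0 ∧
      HasDerivWithinAt ψ d₂ (Iic 0) 0 ∧ d₁ - d₂ = (c - E * ν^2) * ψ 0) ∧
    (∀ x, x ≠ 0 → deriv (deriv ψ) x + E * ψ x = 0) := by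
  have hc1 : Continuous fun y : ℝ => ψ y * y := hψc.mul continuous_id
  have hc2 : Continuous fun y : ℝ => ψ y * (1 + (c/2) * |y|) := by
    exact hψc.mul (continuous_const.add (continuous_const.mul continuous_abs))
  set F : ℝ → ℝ := fun t => ∫ y in (0:ℝ)..t, ψ y * y with hFdef
  set G : ℝ → ℝ := fun t => ∫ y in (0:ℝ)..t, ψ y * (1 + (c/2) * |y|) with hGdef
  have hF : ∀ x : ℝ, HasDerivAt F (ψ x * x) x := fun x =>
    intervalIntegral.integral_hasDerivAt_right (hc1.intervalIntegrable _ _)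
      (hc1.aestronglyMeasurable.stronglyMeasurableAtFilter) hc1.continuousAt
  have hG : ∀ x : ℝ, HasDerivAt G (ψ x * (1 + (c/2) * |x|)) x := fun x =>
    intervalIntegral.integral_hasDerivAt_right (hc2.intervalIntegrable _ _)
      (hc2.aestronglyMeasurable.stronglyMeasurableAtFilter) hc2.continuousAt
  have hF0 : F 0 = 0 := intervalIntegral.integral_same
  have hG0 : G 0 = 0 := intervalIntegral.integral_same
  have hψ0 : ψ 0 = A := by simpa using hψ 0
  -- positive side auxiliary function
  set Φp : ℝ → ℝ := fun t => E * (1 + (c/2) * t) * F t - E * t * G t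
      - (E * A * ν^2 / 2) * t + A * (1 + (c/2) * t) + B * t with hΦpdef
  set Φm : ℝ → ℝ := fun t => E * (1 + (c/2) * (-t)) * F t - E * t * G t
      - (E * A * ν^2 / 2) * (-t) + A * (1 + (c/2) * (-t)) + B * t with hΦmdef
  have hψp : ∀ t : ℝ, 0 ≤ t → ψ t = Φp t := by
    intro t ht
    rw [hψ t, abs_of_nonneg ht]
  have hψm : ∀ t : ℝ, t ≤ 0 → ψ t = Φm t := by
    intro t ht
    rw [hψ t, abs_of_nonpos ht]
  have hΦp' : ∀ x : ℝ, HasDerivAt Φp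
      (E * (c/2) * F x + E * (1 + (c/2) * x) * (ψ x * x) - E * G x
        - E * x * (ψ x * (1 + (c/2) * |x|)) - E * A * ν^2 / 2 + A * (c/2) + B) x := by
    intro x
    have hid : HasDerivAt (fun t : ℝ => t) 1 x := hasDerivAt_id x
    have h1 : HasDerivAt (fun t : ℝ => E * (1 + (c/2) * t)) (E * (c/2)) x := by
      simpa using ((hid.const_mul (c/2)).const_add 1).const_mul E
    have h2 := h1.mul (hF x)
    have h3 : HasDerivAt (fun t : ℝ => E * t) E x := by simpa using hid.const_mul E
    have h4 := h3.mul (hG x)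
    have h5 : HasDerivAt (fun t : ℝ => A * (1 + (c/2) * t)) (A * (c/2)) x := by
      simpa using ((hid.const_mul (c/2)).const_add 1).const_mul A
    have h6 := (((h2.sub h4).sub (hid.const_mul (E * A * ν^2 / 2))).add h5).add
      (hid.const_mul B)
    refine h6.congr_deriv ?_
    ring
  have hΦm' : ∀ x : ℝ, HasDerivAt Φm
      (E * (-(c/2)) * F x + E * (1 + (c/2) * (-x)) * (ψ x * x) - E * G x
        - E * x * (ψ x * (1 + (c/2) * |x|)) + E * A * ν^2 / 2 + A * (-(c/2)) + B) x := by
    intro x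
    have hid : HasDerivAt (fun t : ℝ => t) 1 x := hasDerivAt_id x
    have h1 : HasDerivAt (fun t : ℝ => E * (1 + (c/2) * (-t))) (E * (-(c/2))) x := by
      have := (((hid.neg.const_mul (c/2)).const_add 1).const_mul E)
      exact this.congr_deriv (by ring)
    have h2 := h1.mul (hF x)
    have h3 : HasDerivAt (fun t : ℝ => E * t) E x := by simpa using hid.const_mul E
    have h4 := h3.mul (hG x)
    have h5 : HasDerivAt (fun t : ℝ => A * (1 + (c/2) * (-t))) (A * (-(c/2))) x := by
      have := (((hid.neg.const_mul (c/2)).const_add 1).const_mul A)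
      exact this.congr_deriv (by ring)
    have h7 : HasDerivAt (fun t : ℝ => (E * A * ν^2 / 2) * (-t)) (-(E * A * ν^2 / 2)) x := by
      simpa using hid.neg.const_mul (E * A * ν^2 / 2)
    have h6 := (((h2.sub h4).sub h7).add h5).add (hid.const_mul B)
    refine h6.congr_deriv ?_
    ring
  refine ⟨hψ0, hψc.continuousAt, ?_, ?_⟩
  · -- one-sided derivatives at 0
    refine ⟨A * (c/2) + B - E * A * ν^2 / 2, -(A * (c/2)) + B + E * A * ν^2 / 2, ?_, ?_, ?_⟩
    · have h := hΦp' 0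
      have h' : HasDerivAt Φp (A * (c/2) + B - E * A * ν^2 / 2) 0 := by
        convert h using 1
        simp [hF0, hG0]
        ring
      exact (h'.hasDerivWithinAt).congr (fun y hy => hψp y hy) (hψp 0 le_rfl)
    · have h := hΦm' 0
      have h' : HasDerivAt Φm (-(A * (c/2)) + B + E * A * ν^2 / 2) 0 := by
        convert h using 1
        simp [hF0, hG0]
        ring
      exact (h'.hasDerivWithinAt).congr (fun y hy => hψm y hy) (hψm 0 le_rfl)
    · rw [hψ0]; ring
  · -- second derivative away from 0
    intro x hx
    rcases hx.lt_or_gt with hneg | hpos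
    · -- x < 0
      set K : ℝ := -(A * (c/2)) + B + E * A * ν^2 / 2 with hK
      set D : ℝ → ℝ := fun u => -(E * (c/2)) * F u - E * G u + K with hD
      have hψD : ∀ u : ℝ, u < 0 → HasDerivAt ψ (D u) u := by
        intro u hu
        have h : HasDerivAt Φm (D u) u := by
          convert hΦm' u using 1
          rw [abs_of_neg hu]
          simp only [hD, hK]
          ring
        refine h.congr_of_eventuallyEq ?_
        filter_upwards [Iio_mem_nhds hu] with v hv
        exact hψm v (le_of_lt hv)
      have hev : deriv ψ =ᶠ[𝓝 x] D := by
        filter_upwards [Iio_mem_nhds hneg] with v hv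
        exact (hψD v hv).deriv
      have hDD : HasDerivAt D (-(E * (c/2)) * (ψ x * x) - E * (ψ x * (1 + (c/2) * |x|))) x := by
        have := (((hF x).const_mul (-(E * (c/2)))).sub ((hG x).const_mul E)).add_const K
        exact this
      have hval : -(E * (c/2)) * (ψ x * x) - E * (ψ x * (1 + (c/2) * |x|)) = -(E * ψ x) := by
        rw [abs_of_neg hneg]; ring
      have : deriv (deriv ψ) x = -(E * ψ x) := by
        rw [hev.deriv_eq, hDD.deriv, hval]
      rw [this]; ring
    · -- x > 0
      set K : ℝ := A * (c/2) + B - E * A * ν^2 / 2 with hK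
      set D : ℝ → ℝ := fun u => E * (c/2) * F u - E * G u + K with hD
      have hψD : ∀ u : ℝ, 0 < u → HasDerivAt ψ (D u) u := by
        intro u hu
        have h : HasDerivAt Φp (D u) u := by
          convert hΦp' u using 1
          rw [abs_of_pos hu]
          simp only [hD, hK]
          ring
        refine h.congr_of_eventuallyEq ?_
        filter_upwards [Ioi_mem_nhds hu] with v hv
        exact hψp v (le_of_lt hv)
      have hev : deriv ψ =ᶠ[𝓝 x] D := by
        filter_upwards [Ioi_mem_nhds hpos] with v hv
        exact (hψD v hv).deriv
      have hDD : HasDerivAt D (E * (c/2) * (ψ x * x) - E * (ψ x * (1 + (c/2) * |x|))) x := by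
        have := (((hF x).const_mul (E * (c/2))).sub ((hG x).const_mul E)).add_const K
        exact this
      have hval : E * (c/2) * (ψ x * x) - E * (ψ x * (1 + (c/2) * |x|)) = -(E * ψ x) := by
        rw [abs_of_pos hpos]; ring
      have : deriv (deriv ψ) x = -(E * ψ x) := by
        rw [hev.deriv_eq, hDD.deriv, hval]
      rw [this]; ring
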